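/- Let ξ_1,…,ξ_n be independent real random variables with E ξ_i = 0 and Σ_{i=1}^n E ξ_i^2 = 1. Set ξ̄_i = ξ_i·1{ξ_i ≤ 1} and W̄ = Σ_{i=1}^n ξ̄_i. Then E exp(W̄) ≤ exp(e − 2) and E[ W^2 exp(W̄) ] ≤ 2.06·e + 2.06·(e−1)^2 < 3.42^2, where W = Σ_{i=1}^n ξ_i. -/

import Mathlib

open MeasureTheory ProbabilityTheory

lemma real_exp_eq_tsum (x : ℝ) : Real.exp x = ∑' n : ℕ, x ^ n / n.factorial := by
  rw [Real.exp_eq_exp_ℝ, NormedSpace.exp_eq_tsum_div]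

lemma exp_eq_add_tsum (x : ℝ) :
    Real.exp x = 1 + x + ∑' n : ℕ, x ^ (n + 2) / (n + 2).factorial := by
  have hs := Real.summable_pow_div_factorial x
  have hs1 : Summable (fun n : ℕ => x ^ (n + 1) / (n + 1).factorial) := by
    simpa using (summable_nat_add_iff 1).2 hs
  rw [real_exp_eq_tsum, Summable.tsum_eq_zero_add hs, Summable.tsum_eq_zero_add hs1]
  simp [Nat.factorial]
  ring

lemma tsum_inv_factorial_eq : ∑' n : ℕ, (1:ℝ) ^ (n + 2) / (n + 2).factorial = Real.exp 1 - 2 := by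
  have := exp_eq_add_tsum 1
  simp at this ⊢
  linarith [this]

lemma aux_exp_le_quad {s : ℝ} (hs : s ≤ 1) :
    Real.exp s ≤ 1 + s + (Real.exp 1 - 2) * s ^ 2 := by
  have he : (0.5:ℝ) ≤ Real.exp 1 - 2 := by nlinarith [Real.exp_one_gt_d9]
  rcases le_or_gt s 0 with h0 | h0
  · -- s ≤ 0 : exp s = 1 / exp (-s) ≤ 1/(1 - s + s^2/2) ≤ 1 + s + s^2/2
    have ht : 0 ≤ -s := by linarith
    have hsum := Real.sum_le_exp_of_nonneg ht 3
    have h3 : 1 + (-s) + s ^ 2 / 2 ≤ Real.exp (-s) := by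
      have heq : ∑ i ∈ Finset.range 3, (-s) ^ i / (i.factorial : ℝ)
          = 1 + (-s) + s ^ 2 / 2 := by
        rw [Finset.sum_range_succ, Finset.sum_range_succ, Finset.sum_range_one]
        norm_num [Nat.factorial]
        try ring
      rw [heq] at hsum
      linarith
    have hpos : (0:ℝ) < 1 - s + s ^ 2 / 2 := by nlinarith
    have h4 : Real.exp s ≤ (1 - s + s ^ 2 / 2)⁻¹ := by
      have : Real.exp s = (Real.exp (-s))⁻¹ := by
        rw [← Real.exp_neg, neg_neg]
      rw [this]
      apply inv_anti₀ hpos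
      linarith
    have h5 : (1 - s + s ^ 2 / 2) * (1 - s + s ^ 2 / 2)⁻¹ = 1 :=
      mul_inv_cancel₀ hpos.ne'
    have h6 : (0:ℝ) ≤ (1 - s + s ^ 2 / 2)⁻¹ := by positivity
    nlinarith [h4, h5, h6, sq_nonneg s, sq_nonneg (s^2)]
  · -- 0 < s ≤ 1 : series comparison
    have hs' := Real.summable_pow_div_factorial s
    have hsum2 : Summable (fun n : ℕ => s ^ (n + 2) / (n + 2).factorial) := by
      simpa using (summable_nat_add_iff 2).2 hs'
    have hsum2' : Summable (fun n : ℕ => (1:ℝ) ^ (n + 2) / (n + 2).factorial) := by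
      simpa using (summable_nat_add_iff 2).2 (Real.summable_pow_div_factorial 1)
    have hterm : ∀ n : ℕ, s ^ (n + 2) / (n + 2).factorial
        ≤ s ^ 2 * ((1:ℝ) ^ (n + 2) / (n + 2).factorial) := by
      intro n
      have h1 : s ^ (n + 2) ≤ s ^ 2 := by
        calc s ^ (n + 2) = s ^ 2 * s ^ n := by ring
        _ ≤ s ^ 2 * 1 := by
            gcongr
            exact pow_le_one₀ h0.le hs
        _ = s ^ 2 := by ring
      rw [one_pow]
      rw [div_le_iff₀ (by positivity)] at *
      calc s ^ (n+2) ≤ s ^ 2 := h1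
      _ = s ^ 2 * (1 / (n+2).factorial) * (n+2).factorial := by
          field_simp
    have := Summable.tsum_le_tsum hterm hsum2 (hsum2'.mul_left (s ^ 2) |>.congr (by intro n; ring))
    rw [exp_eq_add_tsum s]
    have h2 : ∑' n : ℕ, s ^ 2 * ((1:ℝ) ^ (n + 2) / (n + 2).factorial)
        = s ^ 2 * (Real.exp 1 - 2) := by
      rw [tsum_mul_left, tsum_inv_factorial_eq]
    rw [h2] at this
    nlinarith [this]

lemma aux_abs_exp {s : ℝ} (hs : s ≤ 1) :
    |Real.exp s - 1| ≤ (Real.exp 1 - 1) * |s| := by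
  have he : (1:ℝ) ≤ Real.exp 1 - 1 := by nlinarith [Real.exp_one_gt_d9]
  rcases le_or_gt 0 s with h0 | h0
  · have h1 : Real.exp s ≤ 1 + s + (Real.exp 1 - 2) * s ^ 2 := aux_exp_le_quad hs
    have h2 : s ^ 2 ≤ s := by nlinarith
    have h3 : (1:ℝ) ≤ Real.exp s := Real.one_le_exp h0
    rw [abs_of_nonneg (by linarith), abs_of_nonneg h0]
    nlinarith [Real.exp_one_gt_d9]
  · have h1 : Real.exp s < 1 := Real.exp_lt_one_iff.2 h0
    have h2 : 1 + s ≤ Real.exp s := by linarith [Real.add_one_le_exp s]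
    rw [abs_of_nonpos (by linarith), abs_of_neg h0]
    nlinarith

lemma aux_numeric : Real.exp (Real.exp 1 - 2) ≤ 2.06 := by
  have h1 : Real.exp 1 < 2.7182818286 := Real.exp_one_lt_d9
  have h2 : 2.7182818283 < Real.exp 1 := Real.exp_one_gt_d9
  have key : Real.exp (Real.exp 1 - 2) = Real.exp 1 / Real.exp (3 - Real.exp 1) := by
    rw [← Real.exp_sub]
    ring_nf
  have h3 : Real.exp (0.2817181714 : ℝ) ≤ Real.exp (3 - Real.exp 1) :=
    Real.exp_le_exp.2 (by linarith)
  have h4 : (1.3253895 : ℝ) ≤ Real.exp (0.2817181714 : ℝ) := by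
    have := Real.sum_le_exp_of_nonneg (by norm_num : (0:ℝ) ≤ 0.2817181714) 5
    rw [Finset.sum_range_succ, Finset.sum_range_succ, Finset.sum_range_succ,
      Finset.sum_range_succ, Finset.sum_range_one] at this
    norm_num [Nat.factorial] at this
    linarith
  rw [key]
  rw [div_le_iff₀ (by positivity)]
  nlinarith [h3, h4]

lemma aux_numeric2 : 2.06 * Real.exp 1 + 2.06 * (Real.exp 1 - 1) ^ 2 < 3.42 ^ 2 := by
  nlinarith [Real.exp_one_lt_d9, Real.exp_one_gt_d9]

lemma aux_integral_prod {Ω ι : Type*} [MeasurableSpace Ω] {μ : MeasureTheory.Measure Ω}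
    [MeasureTheory.IsProbabilityMeasure μ] {f : ι → Ω → ℝ}
    (hindep : iIndepFun f μ)
    (hmeas : ∀ i, Measurable (f i)) (hint : ∀ i, MeasureTheory.Integrable (f i) μ)
    (s : Finset ι) :
    MeasureTheory.Integrable (fun ω => ∏ i ∈ s, f i ω) μ ∧
      ∫ ω, ∏ i ∈ s, f i ω ∂μ = ∏ i ∈ s, ∫ ω, f i ω ∂μ := by
  classical
  induction s using Finset.induction_on with
  | empty => simp
  | @insert a s ha ih =>
    have hprod : (fun ω => ∏ i ∈ s, f i ω) = ∏ i ∈ s, f i := by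
      funext ω; simp
    have hIndep : IndepFun (f a) (fun ω => ∏ i ∈ s, f i ω) μ := by
      rw [hprod]
      exact (hindep.indepFun_finsetProd_of_notMem hmeas ha).symm
    have hi1 : MeasureTheory.Integrable (fun ω => f a ω * ∏ i ∈ s, f i ω) μ := by
      have := hIndep.integrable_mul (hint a) ih.1
      simpa [Pi.mul_def] using this
    constructor
    · simp only [Finset.prod_insert ha]
      exact hi1
    · have heq := hIndep.integral_mul_eq_mul_integral (hint a).aestronglyMeasurable ih.1.aestronglyMeasurable
      simp only [Finset.prod_insert ha]
      calc ∫ ω, f a ω * ∏ i ∈ s, f i ω ∂μ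
          = ∫ ω, (f a * fun ω => ∏ i ∈ s, f i ω) ω ∂μ := by simp [Pi.mul_def]
        _ = (∫ ω, f a ω ∂μ) * ∫ ω, ∏ i ∈ s, f i ω ∂μ := heq
        _ = (∫ ω, f a ω ∂μ) * ∏ i ∈ s, ∫ ω, f i ω ∂μ := by rw [ih.2]

theorem truncated_exp_moment_bounds {Ω : Type*} [MeasurableSpace Ω] (μ : Measure Ω)
    [IsProbabilityMeasure μ] (n : ℕ) (ξ : Fin n → Ω → ℝ)
    (hmeas : ∀ i, Measurable (ξ i))
    (hindep : iIndepFun ξ μ)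
    (hint : ∀ i, Integrable (ξ i) μ) (hint2 : ∀ i, Integrable (fun ω => ξ i ω ^ 2) μ)
    (hmean : ∀ i, ∫ ω, ξ i ω ∂μ = 0)
    (hvar : ∑ i, ∫ ω, (ξ i ω) ^ 2 ∂μ = 1) :
    (∫ ω, Real.exp (∑ i, (if ξ i ω ≤ 1 then ξ i ω else 0)) ∂μ ≤
        Real.exp (Real.exp 1 - 2)) ∧
      (∫ ω, (∑ i, ξ i ω) ^ 2 * Real.exp (∑ i, (if ξ i ω ≤ 1 then ξ i ω else 0)) ∂μ ≤
        2.06 * Real.exp 1 + 2.06 * (Real.exp 1 - 1) ^ 2) ∧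
      2.06 * Real.exp 1 + 2.06 * (Real.exp 1 - 1) ^ 2 < 3.42 ^ 2 := by
  classical
  set T : ℝ → ℝ := fun x => if x ≤ 1 then x else 0 with hTdef
  have hTmeas : Measurable T :=
    Measurable.ite (measurableSet_le measurable_id measurable_const)
      measurable_id measurable_const
  have hTle1 : ∀ x, T x ≤ 1 := by
    intro x; by_cases h : x ≤ 1 <;> simp [hTdef, h] <;> linarith
  have hTlex : ∀ x, T x ≤ x := by
    intro x; by_cases h : x ≤ 1 <;> simp [hTdef, h] <;> linarith
  have hTabs : ∀ x, |T x| ≤ |x| := by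
    intro x; by_cases h : x ≤ 1 <;> simp [hTdef, h]
  have hTsq : ∀ x, T x ^ 2 ≤ x ^ 2 := by
    intro x; by_cases h : x ≤ 1 <;> simp [hTdef, h] <;> positivity
  have hexpTle : ∀ x, Real.exp (T x) ≤ Real.exp 1 := fun x => Real.exp_le_exp.2 (hTle1 x)
  have he2 : (0:ℝ) ≤ Real.exp 1 - 2 := by nlinarith [Real.exp_one_gt_d9]
  have he1 : (0:ℝ) ≤ Real.exp 1 - 1 := by linarith
  set σ : Fin n → ℝ := fun i => ∫ ω, ξ i ω ^ 2 ∂μ with hσdef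
  have hσnn : ∀ i, 0 ≤ σ i := fun i => integral_nonneg fun ω => sq_nonneg _
  -- basic integrability
  have hintT : ∀ i, Integrable (fun ω => T (ξ i ω)) μ := by
    intro i
    refine (hint i).abs.mono' ((hTmeas.comp (hmeas i)).aestronglyMeasurable) ?_
    exact ae_of_all _ fun ω => by simpa using hTabs (ξ i ω)
  have hintT2 : ∀ i, Integrable (fun ω => T (ξ i ω) ^ 2) μ := by
    intro i
    refine (hint2 i).mono' (((hTmeas.comp (hmeas i)).pow_const 2).aestronglyMeasurable) ?_
    refine ae_of_all _ fun ω => ?_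
    rw [Real.norm_eq_abs, abs_of_nonneg (sq_nonneg _)]
    exact hTsq _
  have hintExp : ∀ i, Integrable (fun ω => Real.exp (T (ξ i ω))) μ := by
    intro i
    refine (integrable_const (Real.exp 1)).mono'
      ((Real.measurable_exp.comp (hTmeas.comp (hmeas i))).aestronglyMeasurable) ?_
    refine ae_of_all _ fun ω => ?_
    rw [Real.norm_eq_abs, abs_of_pos (Real.exp_pos _)]
    exact hexpTle _
  -- moments of truncated variables
  have hmeanT : ∀ i, ∫ ω, T (ξ i ω) ∂μ ≤ 0 := by
    intro i
    have := integral_mono (hintT i) (hint i) fun ω => hTlex (ξ i ω)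
    rwa [hmean i] at this
  have hvarT : ∀ i, ∫ ω, T (ξ i ω) ^ 2 ∂μ ≤ σ i := by
    intro i
    exact integral_mono (hintT2 i) (hint2 i) fun ω => hTsq (ξ i ω)
  -- single-variable exponential moment bound
  have hA : ∀ i, ∫ ω, Real.exp (T (ξ i ω)) ∂μ ≤ Real.exp ((Real.exp 1 - 2) * σ i) := by
    intro i
    have step1 : ∫ ω, Real.exp (T (ξ i ω)) ∂μ ≤
        ∫ ω, (1 + T (ξ i ω) + (Real.exp 1 - 2) * T (ξ i ω) ^ 2) ∂μ := by
      refine integral_mono (hintExp i) ?_ fun ω => aux_exp_le_quad (hTle1 (ξ i ω))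
      exact ((integrable_const 1).add (hintT i)).add ((hintT2 i).const_mul _)
    have step2 : ∫ ω, (1 + T (ξ i ω) + (Real.exp 1 - 2) * T (ξ i ω) ^ 2) ∂μ
        = 1 + (∫ ω, T (ξ i ω) ∂μ) + (Real.exp 1 - 2) * ∫ ω, T (ξ i ω) ^ 2 ∂μ := by
      have i1 : Integrable (fun ω => 1 + T (ξ i ω)) μ := (integrable_const 1).add (hintT i)
      have i2 : Integrable (fun ω => (Real.exp 1 - 2) * T (ξ i ω) ^ 2) μ :=
        (hintT2 i).const_mul _
      rw [integral_add i1 i2, integral_add (integrable_const 1) (hintT i),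
        integral_const, MeasureTheory.integral_const_mul]
      simp
    have step3 : 1 + (∫ ω, T (ξ i ω) ∂μ) + (Real.exp 1 - 2) * ∫ ω, T (ξ i ω) ^ 2 ∂μ
        ≤ 1 + (Real.exp 1 - 2) * σ i := by
      have := mul_le_mul_of_nonneg_left (hvarT i) he2
      linarith [hmeanT i]
    have step4 : 1 + (Real.exp 1 - 2) * σ i ≤ Real.exp ((Real.exp 1 - 2) * σ i) := by
      linarith [Real.add_one_le_exp ((Real.exp 1 - 2) * σ i)]
    linarith
  have hAnn : ∀ i, 0 ≤ ∫ ω, Real.exp (T (ξ i ω)) ∂μ :=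
    fun i => integral_nonneg fun ω => (Real.exp_pos _).le
  -- product bound over any subset
  have hProd : ∀ s : Finset (Fin n),
      ∏ k ∈ s, (∫ ω, Real.exp (T (ξ k ω)) ∂μ) ≤ Real.exp (Real.exp 1 - 2) := by
    intro s
    calc ∏ k ∈ s, (∫ ω, Real.exp (T (ξ k ω)) ∂μ)
        ≤ ∏ k ∈ s, Real.exp ((Real.exp 1 - 2) * σ k) :=
          Finset.prod_le_prod (fun k _ => hAnn k) (fun k _ => hA k)
      _ = Real.exp (∑ k ∈ s, (Real.exp 1 - 2) * σ k) := by rw [← Real.exp_sum]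
      _ ≤ Real.exp (Real.exp 1 - 2) := by
          apply Real.exp_le_exp.2
          have hsub : ∑ k ∈ s, σ k ≤ ∑ k, σ k :=
            Finset.sum_le_sum_of_subset_of_nonneg (Finset.subset_univ s)
              (fun k _ _ => hσnn k)
          rw [← Finset.mul_sum]
          calc (Real.exp 1 - 2) * ∑ k ∈ s, σ k ≤ (Real.exp 1 - 2) * ∑ k, σ k := by
                exact mul_le_mul_of_nonneg_left hsub he2
            _ = Real.exp 1 - 2 := by rw [show ∑ k, σ k = 1 from hvar, mul_one]
  have hProdnn : ∀ s : Finset (Fin n),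
      0 ≤ ∏ k ∈ s, (∫ ω, Real.exp (T (ξ k ω)) ∂μ) :=
    fun s => Finset.prod_nonneg fun k _ => hAnn k
  -- independence of composed families
  have hindepExp : iIndepFun
      (fun k => fun ω => Real.exp (T (ξ k ω))) μ := by
    exact hindep.comp (fun _ x => Real.exp (T x))
      (fun _ => Real.measurable_exp.comp hTmeas)
  have hPart1 : ∫ ω, Real.exp (∑ i, (if ξ i ω ≤ 1 then ξ i ω else 0)) ∂μ ≤
      Real.exp (Real.exp 1 - 2) := by
    have hrw : ∀ ω, Real.exp (∑ i, (if ξ i ω ≤ 1 then ξ i ω else 0))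
        = ∏ k, Real.exp (T (ξ k ω)) := by
      intro ω
      rw [← Real.exp_sum]
    calc ∫ ω, Real.exp (∑ i, (if ξ i ω ≤ 1 then ξ i ω else 0)) ∂μ
        = ∫ ω, ∏ k, Real.exp (T (ξ k ω)) ∂μ := by
          exact integral_congr_ae (ae_of_all _ hrw)
      _ = ∏ k, ∫ ω, Real.exp (T (ξ k ω)) ∂μ :=
          (aux_integral_prod hindepExp
            (fun k => Real.measurable_exp.comp (hTmeas.comp (hmeas k)))
            hintExp Finset.univ).2
      _ ≤ Real.exp (Real.exp 1 - 2) := hProd Finset.univ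
  refine ⟨hPart1, ?_, aux_numeric2⟩
  -- Part 2
  set E2 : ℝ := Real.exp (Real.exp 1 - 2) with hE2def
  have hE2nn : 0 ≤ E2 := Real.exp_nonneg _
  have hE2le : E2 ≤ 2.06 := aux_numeric
  have hexpTpos : ∀ x, 0 < Real.exp (T x) := fun x => Real.exp_pos _
  -- second moment with exponential weight
  have hintm2 : ∀ i, Integrable (fun ω => ξ i ω ^ 2 * Real.exp (T (ξ i ω))) μ := by
    intro i
    refine ((hint2 i).const_mul (Real.exp 1)).mono'
      (((hmeas i).pow_const 2).mul
        (Real.measurable_exp.comp (hTmeas.comp (hmeas i))) |>.aestronglyMeasurable) ?_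
    refine ae_of_all _ fun ω => ?_
    rw [Real.norm_eq_abs, abs_mul, abs_of_nonneg (sq_nonneg _),
      abs_of_pos (hexpTpos _)]
    have h1 := hexpTle (ξ i ω)
    nlinarith [sq_nonneg (ξ i ω), hexpTpos (ξ i ω)]
  have hm2le : ∀ i, ∫ ω, ξ i ω ^ 2 * Real.exp (T (ξ i ω)) ∂μ ≤ Real.exp 1 * σ i := by
    intro i
    have : ∫ ω, ξ i ω ^ 2 * Real.exp (T (ξ i ω)) ∂μ ≤
        ∫ ω, Real.exp 1 * ξ i ω ^ 2 ∂μ := by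
      refine integral_mono (hintm2 i) ((hint2 i).const_mul _) fun ω => ?_
      have h1 := hexpTle (ξ i ω)
      nlinarith [sq_nonneg (ξ i ω), hexpTpos (ξ i ω)]
    rwa [MeasureTheory.integral_const_mul] at this
  have hm2nn : ∀ i, 0 ≤ ∫ ω, ξ i ω ^ 2 * Real.exp (T (ξ i ω)) ∂μ :=
    fun i => integral_nonneg fun ω => mul_nonneg (sq_nonneg _) (Real.exp_nonneg _)
  -- first moment with exponential weight
  have hintm1' : ∀ i, Integrable (fun ω => ξ i ω * (Real.exp (T (ξ i ω)) - 1)) μ := by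
    intro i
    refine ((hint2 i).const_mul (Real.exp 1 - 1)).mono'
      (((hmeas i).mul
        ((Real.measurable_exp.comp (hTmeas.comp (hmeas i))).sub measurable_const)).aestronglyMeasurable) ?_
    refine ae_of_all _ fun ω => ?_
    rw [Real.norm_eq_abs, abs_mul]
    calc |ξ i ω| * |Real.exp (T (ξ i ω)) - 1|
        ≤ |ξ i ω| * ((Real.exp 1 - 1) * |T (ξ i ω)|) :=
          mul_le_mul_of_nonneg_left (aux_abs_exp (hTle1 _)) (abs_nonneg _)
      _ ≤ |ξ i ω| * ((Real.exp 1 - 1) * |ξ i ω|) := by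
          exact mul_le_mul_of_nonneg_left
            (mul_le_mul_of_nonneg_left (hTabs (ξ i ω)) he1) (abs_nonneg _)
      _ = (Real.exp 1 - 1) * (|ξ i ω| * |ξ i ω|) := by ring
      _ = (Real.exp 1 - 1) * ξ i ω ^ 2 := by
          rw [← abs_mul, ← sq, abs_of_nonneg (sq_nonneg _)]
  have hintm1 : ∀ i, Integrable (fun ω => ξ i ω * Real.exp (T (ξ i ω))) μ := by
    intro i
    have : (fun ω => ξ i ω * Real.exp (T (ξ i ω)))
        = fun ω => ξ i ω * (Real.exp (T (ξ i ω)) - 1) + ξ i ω := by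
      funext ω; ring
    rw [this]
    exact (hintm1' i).add (hint i)
  have hm1 : ∀ i, |∫ ω, ξ i ω * Real.exp (T (ξ i ω)) ∂μ| ≤ (Real.exp 1 - 1) * σ i := by
    intro i
    have hsplit : ∫ ω, ξ i ω * Real.exp (T (ξ i ω)) ∂μ
        = ∫ ω, ξ i ω * (Real.exp (T (ξ i ω)) - 1) ∂μ := by
      have heq : ∀ ω, ξ i ω * Real.exp (T (ξ i ω))
          = ξ i ω * (Real.exp (T (ξ i ω)) - 1) + ξ i ω := fun ω => by ring
      rw [integral_congr_ae (ae_of_all _ heq), integral_add (hintm1' i) (hint i),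
        hmean i, add_zero]
    rw [hsplit]
    calc |∫ ω, ξ i ω * (Real.exp (T (ξ i ω)) - 1) ∂μ|
        ≤ ∫ ω, |ξ i ω * (Real.exp (T (ξ i ω)) - 1)| ∂μ := by
          have h := MeasureTheory.norm_integral_le_integral_norm (μ := μ)
            (f := fun ω => ξ i ω * (Real.exp (T (ξ i ω)) - 1))
          simp only [Real.norm_eq_abs] at h
          exact h
      _ ≤ ∫ ω, (Real.exp 1 - 1) * ξ i ω ^ 2 ∂μ := by
          refine integral_mono (hintm1' i).abs ((hint2 i).const_mul _) fun ω => ?_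
          rw [abs_mul]
          calc |ξ i ω| * |Real.exp (T (ξ i ω)) - 1|
              ≤ |ξ i ω| * ((Real.exp 1 - 1) * |T (ξ i ω)|) :=
                mul_le_mul_of_nonneg_left (aux_abs_exp (hTle1 _)) (abs_nonneg _)
            _ ≤ |ξ i ω| * ((Real.exp 1 - 1) * |ξ i ω|) := by
                exact mul_le_mul_of_nonneg_left
                  (mul_le_mul_of_nonneg_left (hTabs (ξ i ω)) he1) (abs_nonneg _)
            _ = (Real.exp 1 - 1) * (|ξ i ω| * |ξ i ω|) := by ring
            _ = (Real.exp 1 - 1) * ξ i ω ^ 2 := by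
                rw [← abs_mul, ← sq, abs_of_nonneg (sq_nonneg _)]
      _ = (Real.exp 1 - 1) * σ i := MeasureTheory.integral_const_mul _ _
  -- the per-pair factorized bound
  have key : ∀ i j : Fin n,
      ∫ ω, ξ i ω * ξ j ω * ∏ k, Real.exp (T (ξ k ω)) ∂μ ≤
        (if i = j then E2 * (Real.exp 1 * σ i) else 0)
          + E2 * ((Real.exp 1 - 1) * σ i) * ((Real.exp 1 - 1) * σ j) := by
    intro i j
    set F : Fin n → Ω → ℝ := fun k ω =>
      (if k = i then ξ k ω else 1) * ((if k = j then ξ k ω else 1) * Real.exp (T (ξ k ω)))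
      with hFdef
    have hitemeas : ∀ (c : Prop) (inst : Decidable c),
        Measurable (fun x : ℝ => if c then x else 1) := by
      intro c inst
      by_cases h : c
      · simpa [h] using measurable_id'
      · simpa [h] using measurable_const
    have hφmeas : ∀ k, Measurable (fun x : ℝ =>
        (if k = i then x else 1) * ((if k = j then x else 1) * Real.exp (T x))) := by
      intro k
      exact (hitemeas _ _).mul ((hitemeas _ _).mul (Real.measurable_exp.comp hTmeas))
    have hFmeas : ∀ k, Measurable (F k) := fun k => (hφmeas k).comp (hmeas k)
    have hFindep : iIndepFun F μ :=
      hindep.comp (fun k x => (if k = i then x else 1) *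
        ((if k = j then x else 1) * Real.exp (T x))) hφmeas
    have hFint : ∀ k, Integrable (F k) μ := by
      intro k
      refine (((integrable_const 1).add (hint2 k)).const_mul (2 * Real.exp 1)).mono'
        (hFmeas k).aestronglyMeasurable ?_
      refine ae_of_all _ fun ω => ?_
      have h1 := hexpTle (ξ k ω)
      have h2 := (hexpTpos (ξ k ω)).le
      have hb : ∀ (c : Prop) (inst : Decidable c), |(if c then ξ k ω else 1)| ≤ 1 + |ξ k ω| := by
        intro c inst
        by_cases h : c
        · simp [h]
        · simp [h]
          try positivity
      rw [Real.norm_eq_abs]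
      simp only [hFdef]
      rw [abs_mul, abs_mul, abs_of_pos (Real.exp_pos _)]
      have hbi := hb (k = i) (by infer_instance)
      have hbj := hb (k = j) (by infer_instance)
      calc |if k = i then ξ k ω else 1| * (|if k = j then ξ k ω else 1| * Real.exp (T (ξ k ω)))
          ≤ (1 + |ξ k ω|) * ((1 + |ξ k ω|) * Real.exp 1) := by
            have hB : |if k = j then ξ k ω else 1| * Real.exp (T (ξ k ω))
                ≤ (1 + |ξ k ω|) * Real.exp 1 :=
              mul_le_mul hbj h1 h2 (by positivity)
            exact mul_le_mul hbi hB (mul_nonneg (abs_nonneg _) h2) (by positivity)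
        _ ≤ 2 * Real.exp 1 * (1 + ξ k ω ^ 2) := by
            nlinarith [sq_nonneg (|ξ k ω| - 1), Real.exp_pos (1:ℝ), sq_abs (ξ k ω),
              abs_nonneg (ξ k ω)]
    have hFfact : ∫ ω, ∏ k, F k ω ∂μ = ∏ k, ∫ ω, F k ω ∂μ :=
      (aux_integral_prod hFindep hFmeas hFint Finset.univ).2
    have hFeq : ∀ ω, ξ i ω * ξ j ω * ∏ k, Real.exp (T (ξ k ω)) = ∏ k, F k ω := by
      intro ω
      simp only [hFdef]
      rw [Finset.prod_mul_distrib, Finset.prod_mul_distrib,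
        Finset.prod_ite_eq' Finset.univ i (fun k => ξ k ω),
        Finset.prod_ite_eq' Finset.univ j (fun k => ξ k ω)]
      simp [mul_assoc]
    have hstep : ∫ ω, ξ i ω * ξ j ω * ∏ k, Real.exp (T (ξ k ω)) ∂μ
        = ∏ k, ∫ ω, F k ω ∂μ := by
      rw [integral_congr_ae (ae_of_all _ hFeq), hFfact]
    rw [hstep]
    rcases eq_or_ne i j with rfl | hij
    · -- diagonal
      rw [← Finset.mul_prod_erase Finset.univ _ (Finset.mem_univ i)]
      have hFi : ∫ ω, F i ω ∂μ = ∫ ω, ξ i ω ^ 2 * Real.exp (T (ξ i ω)) ∂μ := by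
        refine integral_congr_ae (ae_of_all _ fun ω => ?_)
        simp [hFdef]
        ring
      have hFk : ∀ k ∈ Finset.univ.erase i, ∫ ω, F k ω ∂μ
          = ∫ ω, Real.exp (T (ξ k ω)) ∂μ := by
        intro k hk
        have hki : k ≠ i := (Finset.mem_erase.1 hk).1
        refine integral_congr_ae (ae_of_all _ fun ω => ?_)
        simp [hFdef, hki]
      rw [hFi, Finset.prod_congr rfl hFk]
      have h1 : ∏ k ∈ Finset.univ.erase i, ∫ ω, Real.exp (T (ξ k ω)) ∂μ ≤ E2 :=
        hProd _
      have h2 : 0 ≤ ∏ k ∈ Finset.univ.erase i, ∫ ω, Real.exp (T (ξ k ω)) ∂μ :=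
        hProdnn _
      have h3 := hm2le i
      have h4 := hm2nn i
      have h5 : 0 ≤ Real.exp 1 * σ i := mul_nonneg (Real.exp_nonneg _) (hσnn i)
      have hmain : (∫ ω, ξ i ω ^ 2 * Real.exp (T (ξ i ω)) ∂μ) *
          (∏ k ∈ Finset.univ.erase i, ∫ ω, Real.exp (T (ξ k ω)) ∂μ)
          ≤ (Real.exp 1 * σ i) * E2 := mul_le_mul h3 h1 h2 h5
      have hposq : 0 ≤ E2 * ((Real.exp 1 - 1) * σ i) * ((Real.exp 1 - 1) * σ i) :=
        mul_nonneg (mul_nonneg hE2nn (mul_nonneg he1 (hσnn i))) (mul_nonneg he1 (hσnn i))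
      simp only [eq_self_iff_true, if_true]
      nlinarith [hmain, hposq]
    · -- off-diagonal
      rw [← Finset.mul_prod_erase Finset.univ _ (Finset.mem_univ i),
        ← Finset.mul_prod_erase _ _ (Finset.mem_erase.2 ⟨Ne.symm hij, Finset.mem_univ j⟩)]
      have hFi : ∫ ω, F i ω ∂μ = ∫ ω, ξ i ω * Real.exp (T (ξ i ω)) ∂μ := by
        refine integral_congr_ae (ae_of_all _ fun ω => ?_)
        simp [hFdef, hij]
      have hFj : ∫ ω, F j ω ∂μ = ∫ ω, ξ j ω * Real.exp (T (ξ j ω)) ∂μ := by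
        refine integral_congr_ae (ae_of_all _ fun ω => ?_)
        simp [hFdef, Ne.symm hij]
      have hFk : ∀ k ∈ (Finset.univ.erase i).erase j, ∫ ω, F k ω ∂μ
          = ∫ ω, Real.exp (T (ξ k ω)) ∂μ := by
        intro k hk
        have hkj : k ≠ j := (Finset.mem_erase.1 hk).1
        have hki : k ≠ i := (Finset.mem_erase.1 (Finset.mem_erase.1 hk).2).1
        refine integral_congr_ae (ae_of_all _ fun ω => ?_)
        simp [hFdef, hki, hkj]
      rw [hFi, hFj, Finset.prod_congr rfl hFk]
      set a := ∫ ω, ξ i ω * Real.exp (T (ξ i ω)) ∂μ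
      set b := ∫ ω, ξ j ω * Real.exp (T (ξ j ω)) ∂μ
      set c := ∏ k ∈ (Finset.univ.erase i).erase j, ∫ ω, Real.exp (T (ξ k ω)) ∂μ
      have hc1 : c ≤ E2 := hProd _
      have hc0 : 0 ≤ c := hProdnn _
      have ha := hm1 i
      have hb := hm1 j
      have step : a * (b * c) ≤ |a| * (|b| * c) := by
        calc a * (b * c) ≤ |a * (b * c)| := le_abs_self _
          _ = |a| * (|b| * c) := by
              rw [abs_mul, abs_mul, abs_of_nonneg hc0]
      have hbnn : 0 ≤ (Real.exp 1 - 1) * σ j := mul_nonneg he1 (hσnn j)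
      have hann : 0 ≤ (Real.exp 1 - 1) * σ i := mul_nonneg he1 (hσnn i)
      have step2 : |a| * (|b| * c)
          ≤ ((Real.exp 1 - 1) * σ i) * (((Real.exp 1 - 1) * σ j) * E2) := by
        calc |a| * (|b| * c)
            ≤ ((Real.exp 1 - 1) * σ i) * (|b| * c) :=
              mul_le_mul_of_nonneg_right ha (mul_nonneg (abs_nonneg _) hc0)
          _ ≤ ((Real.exp 1 - 1) * σ i) * (((Real.exp 1 - 1) * σ j) * E2) := by
              have hbc : |b| * c ≤ ((Real.exp 1 - 1) * σ j) * E2 :=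
                mul_le_mul hb hc1 hc0 hbnn
              exact mul_le_mul_of_nonneg_left hbc hann
      rw [if_neg hij]
      have heq : (0:ℝ) + E2 * ((Real.exp 1 - 1) * σ i) * ((Real.exp 1 - 1) * σ j)
          = ((Real.exp 1 - 1) * σ i) * (((Real.exp 1 - 1) * σ j) * E2) := by ring
      rw [heq]
      exact le_trans step step2
  -- integrability of each pair term
  have hPint : ∀ i j : Fin n, Integrable
      (fun ω => ξ i ω * ξ j ω * ∏ k, Real.exp (T (ξ k ω))) μ := by
    intro i j
    refine (((hint2 i).add (hint2 j)).const_mul (Real.exp 1 ^ n)).mono'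
      ((((hmeas i).mul (hmeas j)).mul
        (Finset.measurable_prod _ fun k _ =>
          Real.measurable_exp.comp (hTmeas.comp (hmeas k)))).aestronglyMeasurable) ?_
    refine ae_of_all _ fun ω => ?_
    have hprodle : ∏ k, Real.exp (T (ξ k ω)) ≤ Real.exp 1 ^ n := by
      calc ∏ k, Real.exp (T (ξ k ω)) ≤ ∏ _k : Fin n, Real.exp 1 :=
            Finset.prod_le_prod (fun k _ => (Real.exp_pos _).le) (fun k _ => hexpTle _)
        _ = Real.exp 1 ^ n := by simp
    have hprodnn : 0 ≤ ∏ k, Real.exp (T (ξ k ω)) :=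
      Finset.prod_nonneg fun k _ => (Real.exp_pos _).le
    rw [Real.norm_eq_abs, abs_mul, abs_mul, abs_of_nonneg hprodnn]
    have hen : (0:ℝ) ≤ Real.exp 1 ^ n := pow_nonneg (Real.exp_nonneg _) n
    have h1 : |ξ i ω| * |ξ j ω| ≤ (ξ i ω ^ 2 + ξ j ω ^ 2) := by
      nlinarith [sq_nonneg (|ξ i ω| - |ξ j ω|), sq_abs (ξ i ω), sq_abs (ξ j ω),
        abs_nonneg (ξ i ω), abs_nonneg (ξ j ω)]
    calc |ξ i ω| * |ξ j ω| * ∏ k, Real.exp (T (ξ k ω))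
        ≤ |ξ i ω| * |ξ j ω| * Real.exp 1 ^ n := by
          exact mul_le_mul_of_nonneg_left hprodle (mul_nonneg (abs_nonneg _) (abs_nonneg _))
      _ ≤ (ξ i ω ^ 2 + ξ j ω ^ 2) * Real.exp 1 ^ n :=
          mul_le_mul_of_nonneg_right h1 hen
      _ = Real.exp 1 ^ n * (ξ i ω ^ 2 + ξ j ω ^ 2) := by ring
  -- rewrite the integrand as a double sum
  have hsum_rw : ∀ ω, (∑ i, ξ i ω) ^ 2 * Real.exp (∑ i, (if ξ i ω ≤ 1 then ξ i ω else 0))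
      = ∑ i, ∑ j, ξ i ω * ξ j ω * ∏ k, Real.exp (T (ξ k ω)) := by
    intro ω
    have h1 : Real.exp (∑ i, (if ξ i ω ≤ 1 then ξ i ω else 0))
        = ∏ k, Real.exp (T (ξ k ω)) := by rw [← Real.exp_sum]
    rw [h1, sq, Finset.sum_mul_sum]
    rw [Finset.sum_mul]
    refine Finset.sum_congr rfl fun i _ => ?_
    rw [Finset.sum_mul]
  have hswap : ∫ ω, (∑ i, ξ i ω) ^ 2 * Real.exp (∑ i, (if ξ i ω ≤ 1 then ξ i ω else 0)) ∂μ
      = ∑ i, ∑ j, ∫ ω, ξ i ω * ξ j ω * ∏ k, Real.exp (T (ξ k ω)) ∂μ := by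
    rw [integral_congr_ae (ae_of_all _ hsum_rw),
      integral_finset_sum _ (fun i _ => integrable_finset_sum _ (fun j _ => hPint i j))]
    exact Finset.sum_congr rfl fun i _ => integral_finset_sum _ (fun j _ => hPint i j)
  rw [hswap]
  have hfinal : ∑ i, ∑ j, ∫ ω, ξ i ω * ξ j ω * ∏ k, Real.exp (T (ξ k ω)) ∂μ
      ≤ ∑ i, ∑ j, ((if i = j then E2 * (Real.exp 1 * σ i) else 0)
          + E2 * ((Real.exp 1 - 1) * σ i) * ((Real.exp 1 - 1) * σ j)) :=
    Finset.sum_le_sum fun i _ => Finset.sum_le_sum fun j _ => key i j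
  have hcomp : ∑ i, ∑ j, ((if i = j then E2 * (Real.exp 1 * σ i) else 0)
        + E2 * ((Real.exp 1 - 1) * σ i) * ((Real.exp 1 - 1) * σ j))
      = E2 * Real.exp 1 + E2 * (Real.exp 1 - 1) ^ 2 := by
    have hdiag : ∀ i : Fin n, ∑ j, (if i = j then E2 * (Real.exp 1 * σ i) else 0)
        = E2 * (Real.exp 1 * σ i) := by
      intro i
      simp [Finset.sum_ite_eq]
    have hrow : ∀ i : Fin n, ∑ j, E2 * ((Real.exp 1 - 1) * σ i) * ((Real.exp 1 - 1) * σ j)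
        = E2 * ((Real.exp 1 - 1) * σ i) * (Real.exp 1 - 1) := by
      intro i
      rw [← Finset.mul_sum, ← Finset.mul_sum, show ∑ j, σ j = 1 from hvar, mul_one]
    calc ∑ i, ∑ j, ((if i = j then E2 * (Real.exp 1 * σ i) else 0)
          + E2 * ((Real.exp 1 - 1) * σ i) * ((Real.exp 1 - 1) * σ j))
        = ∑ i, (E2 * (Real.exp 1 * σ i) + E2 * ((Real.exp 1 - 1) * σ i) * (Real.exp 1 - 1)) := by
          refine Finset.sum_congr rfl fun i _ => ?_
          rw [Finset.sum_add_distrib, hdiag i, hrow i]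
      _ = ∑ i, (E2 * Real.exp 1 * σ i + E2 * (Real.exp 1 - 1) ^ 2 * σ i) := by
          refine Finset.sum_congr rfl fun i _ => ?_
          ring
      _ = E2 * Real.exp 1 * (∑ i, σ i) + E2 * (Real.exp 1 - 1) ^ 2 * (∑ i, σ i) := by
          rw [Finset.sum_add_distrib, ← Finset.mul_sum, ← Finset.mul_sum]
      _ = E2 * Real.exp 1 + E2 * (Real.exp 1 - 1) ^ 2 := by
          rw [show ∑ i, σ i = 1 from hvar]
          ring
  rw [hcomp] at hfinal
  have hlast : E2 * Real.exp 1 + E2 * (Real.exp 1 - 1) ^ 2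
      ≤ 2.06 * Real.exp 1 + 2.06 * (Real.exp 1 - 1) ^ 2 := by
    have h1 : 0 < Real.exp 1 := Real.exp_pos _
    nlinarith [sq_nonneg (Real.exp 1 - 1)]
  linarith
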